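/- Let A be a unital C*-algebra, let ε > 0 and 0 < δ ≤ ε², let e ∈ A with 0 ≤ e ≤ 1, and let a ∈ A with ‖a‖ ≤ 1 and ‖(1 − e)·a‖ < δ. Then there exist e', a' ∈ A with 0 ≤ e' ≤ 1, ‖a'‖ ≤ 1, ‖e − e'‖ ≤ 2ε, ‖a − a'‖ < ε, and e'·a' = a'. -/

import Mathlib

open Pointwise

open CFC in
lemma aux_nonneg_exists {A : Type*} [CStarAlgebra A] [PartialOrder A] [StarOrderedRing A] {x : A} (hx : 0 ≤ x) :
    ∃ y : A, x = star y * y := by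
  refine ⟨sqrt x, ?_⟩
  rw [(IsSelfAdjoint.of_nonneg (sqrt_nonneg (a := x))).star_eq, sqrt_mul_sqrt_self x hx]

/-- Quantitative perturbation: if `0 ≤ e ≤ 1`, `‖a‖ ≤ 1` and `‖(1-e)a‖ < δ ≤ ε²`, then there
are `e'`, `a'` with `0 ≤ e' ≤ 1`, `‖a'‖ ≤ 1`, `‖e - e'‖ ≤ 2ε`, `‖a - a'‖ < ε` and `e' a' = a'`.
Positivity is expressed as in the paper: `x` is positive iff `x = y* y` for some `y`, and
`e ≤ 1` means `1 - e` is positive. -/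
theorem stmt_17 {A : Type*} [CStarAlgebra A] (ε δ : ℝ) (hε : 0 < ε)
    (hδ0 : 0 < δ) (hδ : δ ≤ ε ^ 2)
    (e : A) (he0 : ∃ x : A, e = star x * x) (he1 : ∃ x : A, 1 - e = star x * x)
    (a : A) (ha : ‖a‖ ≤ 1) (hea : ‖(1 - e) * a‖ < δ) :
    ∃ e' a' : A, (∃ x : A, e' = star x * x) ∧ (∃ x : A, 1 - e' = star x * x) ∧
      ‖a'‖ ≤ 1 ∧ ‖e - e'‖ ≤ 2 * ε ∧ ‖a - a'‖ < ε ∧ e' * a' = a' := by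
  letI : PartialOrder A := CStarAlgebra.spectralOrder A
  letI : StarOrderedRing A := CStarAlgebra.spectralOrderedRing A
  obtain ⟨x, hx⟩ := he0
  obtain ⟨y, hy⟩ := he1
  have he0' : (0 : A) ≤ e := hx ▸ star_mul_self_nonneg x
  have he1' : e ≤ 1 := by rw [← sub_nonneg]; exact hy ▸ star_mul_self_nonneg y
  have hsa : IsSelfAdjoint e := .of_nonneg he0'
  -- spectrum bounds
  have hspec0 : ∀ t ∈ spectrum ℝ e, 0 ≤ t :=
    (StarOrderedRing.nonneg_iff_spectrum_nonneg e).mp he0'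
  have hspec1 : ∀ t ∈ spectrum ℝ e, t ≤ 1 := by
    intro t ht
    have h1e : (0:A) ≤ 1 - e := by rwa [sub_nonneg]
    have := (StarOrderedRing.nonneg_iff_spectrum_nonneg (1 - e)).mp h1e (1 - t) ?_
    · linarith
    · have : (1 : ℝ) - t ∈ {(1:ℝ)} - spectrum ℝ e := Set.sub_mem_sub rfl ht
      rw [spectrum.singleton_sub_eq] at this
      simpa using this
  set f : ℝ → ℝ := fun t => 1 - (1 - t) / max (1 - t) ε with hf
  set g : ℝ → ℝ := fun t => min 1 (t + ε) with hg
  set h : ℝ → ℝ := fun t => (max (1 - t) ε)⁻¹ with hh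
  have hmaxpos : ∀ t : ℝ, 0 < max (1 - t) ε := fun t => lt_max_of_lt_right hε
  have hfc : Continuous f := by
    apply Continuous.sub continuous_const
    exact Continuous.div (by fun_prop) (by fun_prop) (fun t => (hmaxpos t).ne')
  have hgc : Continuous g := by fun_prop
  have hhc : Continuous h := Continuous.inv₀ (by fun_prop) (fun t => (hmaxpos t).ne')
  refine ⟨cfc g e, cfc f e * a, ?_, ?_, ?_, ?_, ?_, ?_⟩
  · exact aux_nonneg_exists <| cfc_nonneg fun t ht =>
      le_min (by norm_num) (by linarith [hspec0 t ht, hε.le])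
  · refine aux_nonneg_exists ?_
    rw [sub_nonneg]
    exact cfc_le_one g e fun t ht => min_le_left _ _
  · calc ‖cfc f e * a‖ ≤ ‖cfc f e‖ * ‖a‖ := norm_mul_le _ _
      _ ≤ 1 * 1 := by
          refine mul_le_mul (norm_cfc_le one_pos.le fun t ht => ?_) ha (norm_nonneg a) one_pos.le
          have h1 : 0 ≤ (1 - t) / max (1 - t) ε :=
            div_nonneg (by linarith [hspec1 t ht]) (hmaxpos t).le
          have h2 : (1 - t) / max (1 - t) ε ≤ 1 :=
            div_le_one_of_le₀ (le_max_left _ _) (hmaxpos t).le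
          rw [Real.norm_eq_abs, abs_le]; constructor <;> simp [hf] <;> linarith
      _ = 1 := by norm_num
  · have : e - cfc g e = cfc (fun t => t - g t) e := by
      rw [cfc_sub (fun t => t) g e (by fun_prop) hgc.continuousOn, cfc_id' ℝ e]
    rw [this]
    refine norm_cfc_le (by linarith) fun t ht => ?_
    have h0 := hspec0 t ht; have h1 := hspec1 t ht
    rw [Real.norm_eq_abs, abs_le]
    constructor <;> · simp only [hg, min_def, neg_le_sub_iff_le_add, tsub_le_iff_right]
                      split_ifs <;> linarith
  · have key : a - cfc f e * a = cfc h e * ((1 - e) * a) := by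
      have h1 : (1 : A) - cfc f e = cfc h e * (1 - e) := by
        have e1 : (1 : A) - e = cfc (fun t : ℝ => 1 - t) e := by
          rw [cfc_sub (fun _ => (1:ℝ)) (fun t => t) e (by fun_prop) (by fun_prop), cfc_id' ℝ e, cfc_const_one ℝ e]
        have e2 : (1 : A) - cfc f e = cfc (fun t => 1 - f t) e := by
          rw [cfc_sub (fun _ => (1:ℝ)) f e (by fun_prop) hfc.continuousOn, cfc_const_one ℝ e]
        rw [e1, e2, ← cfc_mul h (fun t => 1 - t) e hhc.continuousOn (by fun_prop)]
        refine cfc_congr fun t ht => ?_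
        simp only [hf, hh]
        field_simp
        ring
      rw [← mul_assoc, ← h1, sub_mul, one_mul]
    rw [key]
    calc ‖cfc h e * ((1 - e) * a)‖ ≤ ‖cfc h e‖ * ‖(1 - e) * a‖ := norm_mul_le _ _
      _ ≤ ε⁻¹ * ‖(1 - e) * a‖ := by
          refine mul_le_mul_of_nonneg_right ?_ (norm_nonneg _)
          refine norm_cfc_le (by positivity) fun t ht => ?_
          rw [Real.norm_eq_abs, abs_of_nonneg (by positivity)]
          exact inv_anti₀ hε (le_max_right _ _)
      _ < ε⁻¹ * δ := mul_lt_mul_of_pos_left hea (by positivity)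
      _ ≤ ε⁻¹ * ε ^ 2 := by gcongr
      _ = ε := by field_simp [pow_two]
  · rw [← mul_assoc, ← cfc_mul g f e hgc.continuousOn hfc.continuousOn]
    congr 1
    refine cfc_congr fun t ht => ?_
    simp only [hg, hf]
    rcases le_or_gt (1 - t) ε with hle | hlt
    · have : min 1 (t + ε) = 1 := min_eq_left (by linarith)
      rw [this, one_mul]
    · have : max (1 - t) ε = 1 - t := max_eq_left hlt.le
      rw [this, div_self (by linarith), sub_self, mul_zero]
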